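/- Let f : [0,1] → ℝ be continuous with f(1) − f(0) = d an integer with |d| ≥ 2. Then for every c ∈ ℝ, the set {t ∈ [0,1] : f(t) − c ∈ ℤ} has at least |d| elements. Consequently, the circle map φ(e^{2πit}) = e^{2πif(t)} of degree d satisfies #φ^{-1}(w) ≥ |d| for every w in the circle. -/

import Mathlib

lemma lift_key (f : ℝ → ℝ) (hf : ContinuousOn f (Set.Icc 0 1))
    (d : ℤ) (hd : f 1 - f 0 = d) (hd2 : 2 ≤ |d|) (c : ℝ) :
    ∃ t : ℕ → ℝ, (∀ j < d.natAbs, t j ∈ Set.Ico (0:ℝ) 1 ∧ ∃ n : ℤ, f (t j) - c = n) ∧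
      ∀ i < d.natAbs, ∀ j < d.natAbs, t i = t j → i = j := by
  set a := f 0 with ha
  set b := f 1 with hb
  set k := d.natAbs with hk
  have hdne : d ≠ 0 := by
    intro h; rw [h] at hd2; simp at hd2
  have hcont : ContinuousOn f (Set.uIcc 0 1) := by
    rwa [Set.uIcc_of_le (by norm_num : (0:ℝ) ≤ 1)]
  have hba : b = a + d := by linarith [hd]
  obtain ⟨v, hv⟩ : ∃ v : ℕ → ℝ, ∀ j < k, v j ∈ Set.uIcc a b ∧ v j ≠ b ∧
      (∃ n : ℤ, v j - c = n) ∧ ∀ i < k, v i = v j → i = j := by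
    rcases lt_or_gt_of_ne hdne with hneg | hpos
    · -- d < 0 : v j = c + ⌊a - c⌋ - j ∈ (b, a]
      refine ⟨fun j => c + ⌊a - c⌋ - j, fun j hj => ?_⟩
      have hknat : (k : ℤ) = -d := by omega
      have h1 : c + (⌊a - c⌋ : ℝ) - j ≤ a := by
        have := Int.floor_le (a - c); linarith [Nat.cast_nonneg (α := ℝ) j]
      have h2 : b < c + (⌊a - c⌋ : ℝ) - j := by
        have h3 : a - c < ⌊a - c⌋ + 1 := Int.lt_floor_add_one _
        have hjk : (j : ℝ) ≤ (k : ℝ) - 1 := by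
          have : (j:ℤ) ≤ (k:ℤ) - 1 := by omega
          exact_mod_cast this
        have hkd : (k : ℝ) = -(d : ℝ) := by exact_mod_cast hknat
        rw [hba]; linarith
      refine ⟨?_, by simp only []; intro h; linarith,
        ⟨⌊a - c⌋ - j, by push_cast; ring⟩, fun i hi hij => ?_⟩
      · rw [Set.mem_uIcc]; right; exact ⟨le_of_lt h2, h1⟩
      · simp only [] at hij
        have : (i : ℝ) = j := by linarith
        exact_mod_cast this
    · -- d > 0 : v j = c + ⌈a - c⌉ + j ∈ [a, b)
      refine ⟨fun j => c + ⌈a - c⌉ + j, fun j hj => ?_⟩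
      have hknat : (k : ℤ) = d := by omega
      have h1 : a ≤ c + (⌈a - c⌉ : ℝ) + j := by
        have := Int.le_ceil (a - c); linarith [Nat.cast_nonneg (α := ℝ) j]
      have h2 : c + (⌈a - c⌉ : ℝ) + j < b := by
        have h3 : (⌈a - c⌉ : ℝ) < a - c + 1 := Int.ceil_lt_add_one _
        have hjk : (j : ℝ) ≤ (k : ℝ) - 1 := by
          have : (j:ℤ) ≤ (k:ℤ) - 1 := by omega
          exact_mod_cast this
        have hkd : (k : ℝ) = (d : ℝ) := by exact_mod_cast hknat
        rw [hba]; linarith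
      refine ⟨?_, by simp only []; intro h; linarith,
        ⟨⌈a - c⌉ + j, by push_cast; ring⟩, fun i hi hij => ?_⟩
      · rw [Set.mem_uIcc]; left; exact ⟨h1, le_of_lt h2⟩
      · simp only [] at hij
        have : (i : ℝ) = j := by linarith
        exact_mod_cast this
  have hIVT : ∀ j < k, ∃ t ∈ Set.Icc (0:ℝ) 1, f t = v j := by
    intro j hj
    have hmem : v j ∈ Set.uIcc (f 0) (f 1) := (hv j hj).1
    have := intermediate_value_uIcc hcont hmem
    rw [Set.uIcc_of_le (by norm_num : (0:ℝ) ≤ 1)] at this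
    obtain ⟨t, ht, hft⟩ := this
    exact ⟨t, ht, hft⟩
  choose! t ht hft using hIVT
  refine ⟨t, fun j hj => ?_, fun i hi j hj hij => ?_⟩
  · obtain ⟨h0, h1⟩ := ht j hj
    have hne : t j ≠ 1 := by
      intro h
      exact (hv j hj).2.1 (by rw [← hft j hj, h])
    refine ⟨⟨h0, lt_of_le_of_ne h1 hne⟩, ?_⟩
    obtain ⟨n, hn⟩ := (hv j hj).2.2.1
    exact ⟨n, by rw [hft j hj]; exact hn⟩
  · apply (hv j hj).2.2.2 i hi
    rw [← hft i hi, ← hft j hj, hij]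

open Complex in
/-- A lift `f` of a degree-`d` circle map with `|d| ≥ 2` takes each value mod ℤ
at least `|d|` times on `[0,1]`; consequently every fiber of the circle map
`e^{2πit} ↦ e^{2πif(t)}` has at least `|d|` points. -/
theorem lift_degree_fiber_count (f : ℝ → ℝ) (hf : ContinuousOn f (Set.Icc 0 1))
    (d : ℤ) (hd : f 1 - f 0 = d) (hd2 : 2 ≤ |d|) :
    (∀ c : ℝ, ∃ S : Finset ℝ, d.natAbs ≤ S.card ∧
      ∀ t ∈ S, t ∈ Set.Icc (0 : ℝ) 1 ∧ ∃ n : ℤ, f t - c = n) ∧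
    (∀ w : ℂ, ‖w‖ = 1 → ∃ S : Finset ℂ, d.natAbs ≤ S.card ∧
      ∀ z ∈ S, ∃ t ∈ Set.Ico (0 : ℝ) 1,
        z = Complex.exp (2 * Real.pi * Complex.I * t) ∧
        Complex.exp (2 * Real.pi * Complex.I * (f t)) = w) := by
  constructor
  · intro c
    obtain ⟨t, ht, hinj⟩ := lift_key f hf d hd hd2 c
    refine ⟨(Finset.range d.natAbs).image t, ?_, ?_⟩
    · rw [Finset.card_image_of_injOn (fun i hi j hj =>
        hinj i (Finset.mem_range.1 hi) j (Finset.mem_range.1 hj)), Finset.card_range]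
    · intro x hx
      obtain ⟨j, hj, rfl⟩ := Finset.mem_image.1 hx
      obtain ⟨hmem, hn⟩ := ht j (Finset.mem_range.1 hj)
      exact ⟨Set.mem_Icc_of_Ico hmem, hn⟩
  · intro w hw
    set c : ℝ := Complex.arg w / (2 * Real.pi) with hc
    have hπ : (Real.pi : ℝ) ≠ 0 := Real.pi_ne_zero
    have hwc : Complex.exp (2 * Real.pi * Complex.I * c) = w := by
      have h1 : (↑‖w‖ : ℂ) * Complex.exp (Complex.arg w * Complex.I) = w :=
        Complex.norm_mul_exp_arg_mul_I w
      rw [hw] at h1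
      rw [← h1]
      simp only [Complex.ofReal_one, one_mul]
      congr 1
      have hπc : (Real.pi : ℂ) ≠ 0 := by exact_mod_cast hπ
      push_cast [hc]
      field_simp
    obtain ⟨t, ht, hinj⟩ := lift_key f hf d hd hd2 c
    refine ⟨(Finset.range d.natAbs).image
      (fun j => Complex.exp (2 * Real.pi * Complex.I * t j)), ?_, ?_⟩
    · rw [Finset.card_image_of_injOn, Finset.card_range]
      intro i hi j hj hij
      simp only [Finset.coe_range, Set.mem_Iio] at hi hj
      apply hinj i hi j hj
      rw [Complex.exp_eq_exp_iff_exists_int] at hij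
      obtain ⟨n, hn⟩ := hij
      have hti := (ht i hi).1
      have htj := (ht j hj).1
      have h2 : (t i : ℂ) = t j + n := by
        have h2π : (2 * (Real.pi:ℂ) * Complex.I) ≠ 0 := by
          simp [Complex.I_ne_zero, hπ, Complex.ofReal_ne_zero]

        have : (2 * (Real.pi:ℂ) * Complex.I) * (t i) =
            (2 * (Real.pi:ℂ) * Complex.I) * (t j + n) := by ring_nf at hn ⊢; linear_combination hn
        exact mul_left_cancel₀ h2π this
      have h3 : t i = t j + n := by exact_mod_cast h2
      have : (n : ℝ) = 0 := by
        rcases Set.mem_Ico.1 hti with ⟨hi0, hi1⟩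
        rcases Set.mem_Ico.1 htj with ⟨hj0, hj1⟩
        have : -1 < (n:ℝ) ∧ (n:ℝ) < 1 := ⟨by linarith, by linarith⟩
        have hn1 : -1 < n ∧ n < 1 := ⟨by exact_mod_cast this.1, by exact_mod_cast this.2⟩
        have hn0 : n = 0 := by omega
        exact_mod_cast hn0
      linarith [h3, this]
    · intro z hz
      obtain ⟨j, hj, rfl⟩ := Finset.mem_image.1 hz
      have hj' := Finset.mem_range.1 hj
      obtain ⟨hmem, n, hn⟩ := ht j hj'
      refine ⟨t j, hmem, rfl, ?_⟩
      have hfe : (f (t j) : ℂ) = c + n := by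
        have : f (t j) = c + n := by linarith
        exact_mod_cast this
      rw [hfe, ← hwc]
      rw [mul_add, Complex.exp_add]
      have : Complex.exp (2 * ↑Real.pi * Complex.I * ↑n) = 1 := by
        have := Complex.exp_int_mul_two_pi_mul_I n
        rw [← this]; congr 1; ring
      rw [this, mul_one]
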